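/- For every positive integer n and every real t in [0,1], one has |B_{2n}(t) - B_{2n}| \le (2 - 2^{1-2n}) |B_{2n}|, where B_{2n} is the 2n-th Bernoulli number. -/

import Mathlib

open Set Real Filter

lemma sinc_ne (k : ℕ) : ((-1:ℝ)^(k+1) * (2 * π) ^ (2 * k + 1) / 2 / Nat.factorial (2 * k + 1) : ℝ) ≠ 0 := by
  have h1 : ((-1:ℝ)^(k+1)) ≠ 0 := by simp
  have h2 : ((2 * π:ℝ)) ^ (2*k+1) ≠ 0 := by positivity
  have h3 : (Nat.factorial (2 * k + 1) : ℝ) ≠ 0 := by positivity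
  field_simp
  exact div_ne_zero (mul_ne_zero h1 h2) (mul_ne_zero two_ne_zero h3)

lemma cosc_ne (k : ℕ) : ((-1:ℝ)^(k+1) * (2 * π) ^ (2 * k) / 2 / Nat.factorial (2 * k) : ℝ) ≠ 0 := by
  have h1 : ((-1:ℝ)^(k+1)) ≠ 0 := by simp
  have h2 : ((2 * π:ℝ)) ^ (2*k) ≠ 0 := by positivity
  have h3 : (Nat.factorial (2 * k) : ℝ) ≠ 0 := by positivity
  field_simp
  exact div_ne_zero (mul_ne_zero h1 h2) (mul_ne_zero two_ne_zero h3)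

lemma odd_zero {k : ℕ} (hk : k ≠ 0) {x : ℝ} (hx : x ∈ Icc (0:ℝ) 1)
    (hs : ∀ n : ℕ, Real.sin (2 * π * n * x) = 0) :
    bernoulliFun (2 * k + 1) x = 0 := by
  have h := hasSum_one_div_nat_pow_mul_sin hk hx
  have h0 : HasSum (fun n : ℕ => 1 / (n : ℝ) ^ (2 * k + 1) * Real.sin (2 * π * n * x)) 0 := by
    convert hasSum_zero with n
    rw [hs n, mul_zero]
  have := h.unique h0
  rcases mul_eq_zero.mp this with h' | h'
  · exact absurd h' (sinc_ne k)
  · exact h'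

lemma bern_sym {k : ℕ} (hk : k ≠ 0) {x : ℝ} (hx : x ∈ Icc (0:ℝ) 1) :
    bernoulliFun (2 * k) (1 - x) = bernoulliFun (2 * k) x := by
  have hx' : 1 - x ∈ Icc (0:ℝ) 1 := ⟨by linarith [hx.2], by linarith [hx.1]⟩
  have h1 := hasSum_one_div_nat_pow_mul_cos hk hx'
  have h2 := hasSum_one_div_nat_pow_mul_cos hk hx
  have he : (fun n : ℕ => 1 / (n : ℝ) ^ (2 * k) * Real.cos (2 * π * n * (1 - x)))
      = fun n : ℕ => 1 / (n : ℝ) ^ (2 * k) * Real.cos (2 * π * n * x) := by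
    funext n
    congr 1
    have : 2 * π * n * (1 - x) = n * (2 * π) - 2 * π * n * x := by ring
    rw [this, Real.cos_nat_mul_two_pi_sub]
  rw [he] at h1
  have := h1.unique h2
  exact mul_left_cancel₀ (cosc_ne k) (by simpa [bernoulliFun] using this)

lemma alt_sum {k : ℕ} (hk : k ≠ 0) {S A : ℝ}
    (hS : HasSum (fun n : ℕ => 1/(n:ℝ)^(2*k)) S)
    (hA : HasSum (fun n : ℕ => (-1:ℝ)^n / (n:ℝ)^(2*k)) A) :
    A + S = (2/2^(2*k)) * S := by
  have hadd := hA.add hS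
  have hinj : Function.Injective (fun m : ℕ => 2*m) := fun a b h =>
    Nat.eq_of_mul_eq_mul_left two_pos h
  have hvan : ∀ x ∉ Set.range (fun m : ℕ => 2*m),
      ((-1:ℝ)^x/(x:ℝ)^(2*k) + 1/(x:ℝ)^(2*k)) = 0 := by
    intro x hx
    have hodd : Odd x := by simpa using hx
    rw [hodd.neg_one_pow]
    ring
  have h2 : HasSum ((fun n : ℕ => (-1:ℝ)^n/(n:ℝ)^(2*k) + 1/(n:ℝ)^(2*k)) ∘ (fun m : ℕ => 2*m))
      (A + S) := (Function.Injective.hasSum_iff hinj hvan).mpr hadd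
  have h3 : HasSum (fun m : ℕ => (2/2^(2*k)) * (1/(m:ℝ)^(2*k))) ((2/2^(2*k)) * S) :=
    hS.mul_left _
  have hfun : ((fun n : ℕ => (-1:ℝ)^n/(n:ℝ)^(2*k) + 1/(n:ℝ)^(2*k)) ∘ (fun m : ℕ => 2*m))
      = fun m : ℕ => (2/2^(2*k)) * (1/(m:ℝ)^(2*k)) := by
    funext m
    simp only [Function.comp_apply]
    rcases Nat.eq_zero_or_pos m with rfl | hm
    · simp [zero_pow hk, zero_pow (by omega : 2*k ≠ 0)]
    · have hm' : ((m:ℝ)) ≠ 0 := Nat.cast_ne_zero.mpr (by omega)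
      have h2m : (((2*m : ℕ)):ℝ) = 2 * m := by push_cast; ring
      rw [pow_mul, neg_one_sq, one_pow, h2m, mul_pow]
      have : (2:ℝ)^(2*k) ≠ 0 := by positivity
      field_simp
      norm_num
  rw [hfun] at h2
  exact h2.unique h3

lemma bern_half {k : ℕ} (hk : k ≠ 0) :
    bernoulliFun (2 * k) (1/2) = (2 / 2 ^ (2*k) - 1) * bernoulliFun (2 * k) 0 := by
  have h0 : (0:ℝ) ∈ Icc (0:ℝ) 1 := by norm_num
  have hhalf : (1/2:ℝ) ∈ Icc (0:ℝ) 1 := by norm_num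
  have hS := hasSum_one_div_nat_pow_mul_cos hk h0
  have hA := hasSum_one_div_nat_pow_mul_cos hk hhalf
  simp only [mul_zero, Real.cos_zero, mul_one] at hS
  have hfun : (fun n : ℕ => 1/(n:ℝ)^(2*k) * Real.cos (2*π*n*(1/2)))
      = fun n : ℕ => (-1:ℝ)^n/(n:ℝ)^(2*k) := by
    funext n
    have harg : (2:ℝ)*π*n*(1/2) = n*π - 0 := by ring
    rw [harg, Real.cos_nat_mul_pi_sub, Real.cos_zero, mul_one]
    ring
  rw [hfun] at hA
  have key := alt_sum hk hS hA
  apply mul_left_cancel₀ (cosc_ne k)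
  have : bernoulliFun (2*k) = fun x =>
      (Polynomial.map (algebraMap ℚ ℝ) (Polynomial.bernoulli (2*k))).eval x := rfl
  rw [this]
  nlinarith [key]

lemma bern_one (t : ℝ) : bernoulliFun 1 t = t - 1/2 := by
  simp [bernoulliFun, Polynomial.bernoulli, Finset.sum_range_succ, bernoulli_zero, bernoulli_one]
  norm_num
  ring

lemma sign_odd : ∀ (n : ℕ), ∀ t ∈ Ioo (0:ℝ) (1/2), 0 < (-1:ℝ)^(n+1) * bernoulliFun (2*n+1) t := by
  intro n
  induction n with
  | zero =>
    intro t ht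
    rw [show 2*0+1 = 1 by rfl, bern_one]
    simp only [pow_one]
    nlinarith [ht.1, ht.2]
  | succ n ih =>
    intro t ht
    set g : ℝ → ℝ := fun x => (-1:ℝ)^(n+1) * bernoulliFun (2*n+3) x with hg
    have hd1 : ∀ x, HasDerivAt g ((-1:ℝ)^(n+1) * ((2*n+3) * bernoulliFun (2*n+2) x)) x := by
      intro x
      have := (hasDerivAt_bernoulliFun (2*n+3) x).const_mul ((-1:ℝ)^(n+1))
      simpa using this
    have hderiv1 : deriv g = fun x => (-1:ℝ)^(n+1) * ((2*n+3) * bernoulliFun (2*n+2) x) :=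
      funext fun x => (hd1 x).deriv
    have hd2 : ∀ x, HasDerivAt (deriv g)
        ((-1:ℝ)^(n+1) * ((2*n+3) * ((2*n+2) * bernoulliFun (2*n+1) x))) x := by
      intro x
      rw [hderiv1]
      have := ((hasDerivAt_bernoulliFun (2*n+2) x).const_mul ((2*n+3 : ℕ):ℝ)).const_mul
        ((-1:ℝ)^(n+1))
      simpa [mul_assoc] using this
    have hconv : StrictConvexOn ℝ (Icc (0:ℝ) (1/2)) g := by
      apply strictConvexOn_of_deriv2_pos (convex_Icc _ _)
      · exact (Continuous.mul continuous_const (Polynomial.continuous _)).continuousOn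
      · intro x hx
        rw [interior_Icc] at hx
        have h2 : deriv (deriv g) x
            = (-1:ℝ)^(n+1) * ((2*n+3) * ((2*n+2) * bernoulliFun (2*n+1) x)) := (hd2 x).deriv
        have : deriv^[2] g x = deriv (deriv g) x := by
          simp [Function.iterate_succ, Function.comp]
        rw [this, h2]
        have hpos := ih x hx
        have hc : (0:ℝ) < ((2*n+3 : ℕ):ℝ) * ((2*n+2 : ℕ):ℝ) := by positivity
        calc (0:ℝ) < (((2*n+3 : ℕ):ℝ) * ((2*n+2 : ℕ):ℝ)) *
              ((-1:ℝ)^(n+1) * bernoulliFun (2*n+1) x) := mul_pos hc hpos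
          _ = (-1:ℝ)^(n+1) * ((2*n+3) * ((2*n+2) * bernoulliFun (2*n+1) x)) := by
              push_cast; ring
    have hz : ∀ x, x ∈ Icc (0:ℝ) 1 → (∀ m : ℕ, Real.sin (2*π*m*x) = 0) →
        bernoulliFun (2*n+3) x = 0 := by
      intro x hx hs
      have := odd_zero (k := n+1) (by omega) hx hs
      rwa [show 2*(n+1)+1 = 2*n+3 from by omega] at this
    have hg0 : g 0 = 0 := by
      show (-1:ℝ)^(n+1) * bernoulliFun (2*n+3) 0 = 0
      rw [hz 0 (by norm_num) (fun m => by simp), mul_zero]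
    have hgh : g (1/2) = 0 := by
      show (-1:ℝ)^(n+1) * bernoulliFun (2*n+3) (1/2) = 0
      rw [hz (1/2) (by norm_num) (fun m => by
        rw [show 2*π*(m:ℝ)*(1/2) = m*π from by ring, Real.sin_nat_mul_pi]), mul_zero]
    obtain ⟨ht1, ht2⟩ := ht
    have hmem0 : (0:ℝ) ∈ Icc (0:ℝ) (1/2) := by norm_num
    have hmemh : (1/2:ℝ) ∈ Icc (0:ℝ) (1/2) := by norm_num
    have hne : (0:ℝ) ≠ 1/2 := by norm_num
    have ha : (0:ℝ) < 1 - 2*t := by linarith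
    have hb : (0:ℝ) < 2*t := by linarith
    have hab : (1 - 2*t) + 2*t = 1 := by ring
    have := hconv.2 hmem0 hmemh hne ha hb hab
    rw [hg0, hgh] at this
    have hpt : (1 - 2*t) • (0:ℝ) + (2*t) • (1/2:ℝ) = t := by
      simp [smul_eq_mul]; ring
    rw [hpt] at this
    simp only [smul_eq_mul, mul_zero, add_zero] at this
    have hlt : g t < 0 := this
    have he : (2*(n+1)+1) = 2*n+3 := by omega
    rw [he, pow_succ]
    have hlt' : (-1:ℝ)^(n+1) * bernoulliFun (2*n+3) t < 0 := hlt
    have hx : (-1:ℝ)^(n+1) * (-1) * bernoulliFun (2*n+3) t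
        = -((-1:ℝ)^(n+1) * bernoulliFun (2*n+3) t) := by ring
    rw [hx]
    linarith

lemma bern_between {k : ℕ} (hk : k ≠ 0) {t : ℝ} (ht : t ∈ Icc (0:ℝ) (1/2)) :
    |bernoulliFun (2*k) t - bernoulliFun (2*k) 0|
      ≤ |bernoulliFun (2*k) (1/2) - bernoulliFun (2*k) 0| := by
  obtain ⟨n, rfl⟩ : ∃ j, k = j + 1 := ⟨k-1, by omega⟩
  rw [show 2*(n+1) = 2*n+2 from by omega]
  set H : ℝ → ℝ := fun x => (-1:ℝ)^(n+1) * bernoulliFun (2*n+2) x with hH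
  have hd : ∀ x, HasDerivAt H ((-1:ℝ)^(n+1) * ((2*n+2) * bernoulliFun (2*n+1) x)) x := by
    intro x
    have := (hasDerivAt_bernoulliFun (2*n+2) x).const_mul ((-1:ℝ)^(n+1))
    simpa using this
  have hderiv : deriv H = fun x => (-1:ℝ)^(n+1) * ((2*n+2) * bernoulliFun (2*n+1) x) :=
    funext fun x => (hd x).deriv
  have hmono : StrictMonoOn H (Icc (0:ℝ) (1/2)) := by
    apply strictMonoOn_of_deriv_pos (convex_Icc _ _)
    · exact (Continuous.mul continuous_const (Polynomial.continuous _)).continuousOn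
    · intro x hx
      rw [interior_Icc] at hx
      rw [hderiv]
      have hpos := sign_odd n x hx
      have hc : (0:ℝ) < ((2*n+2 : ℕ):ℝ) := by positivity
      calc (0:ℝ) < ((2*n+2 : ℕ):ℝ) * ((-1:ℝ)^(n+1) * bernoulliFun (2*n+1) x) :=
            mul_pos hc hpos
        _ = (-1:ℝ)^(n+1) * ((2*n+2) * bernoulliFun (2*n+1) x) := by push_cast; ring
  have hmem0 : (0:ℝ) ∈ Icc (0:ℝ) (1/2) := by norm_num
  have hmemh : (1/2:ℝ) ∈ Icc (0:ℝ) (1/2) := by norm_num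
  have h1 : H 0 ≤ H t := hmono.monotoneOn hmem0 ht ht.1
  have h2 : H t ≤ H (1/2) := hmono.monotoneOn ht hmemh ht.2
  have e1 : H t - H 0 = (-1:ℝ)^(n+1) * (bernoulliFun (2*n+2) t - bernoulliFun (2*n+2) 0) := by
    simp only [hH]; ring
  have e2 : H (1/2) - H 0
      = (-1:ℝ)^(n+1) * (bernoulliFun (2*n+2) (1/2) - bernoulliFun (2*n+2) 0) := by
    simp only [hH]; ring
  have habs : ∀ d : ℝ, |(-1:ℝ)^(n+1) * d| = |d| := fun d => by
    rw [abs_mul, abs_pow, abs_neg, abs_one, one_pow, one_mul]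
  calc |bernoulliFun (2*n+2) t - bernoulliFun (2*n+2) 0|
      = |H t - H 0| := by rw [e1, habs]
    _ ≤ |H (1/2) - H 0| := by
        rw [abs_of_nonneg (by linarith), abs_of_nonneg (by linarith)]
        linarith
    _ = |bernoulliFun (2*n+2) (1/2) - bernoulliFun (2*n+2) 0| := by rw [e2, habs]

noncomputable def B (n : ℕ) (t : ℝ) : ℝ := Polynomial.aeval t (Polynomial.bernoulli n)

noncomputable def Bnum (n : ℕ) : ℝ := ((bernoulli n : ℚ) : ℝ)

theorem stmt17 (n : ℕ) (hn : 1 ≤ n) (t : ℝ) (ht : t ∈ Icc (0:ℝ) 1) :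
    |B (2*n) t - Bnum (2*n)| ≤ (2 - 1/(2:ℝ)^(2*n-1)) * |Bnum (2*n)| := by
  have hn0 : n ≠ 0 := by omega
  have hB : ∀ x, B (2*n) x = bernoulliFun (2*n) x := fun x => by
    rw [B, bernoulliFun, Polynomial.eval_map, Polynomial.aeval_def]
  have hBn : Bnum (2*n) = bernoulliFun (2*n) 0 := by
    rw [Bnum, bernoulliFun_eval_zero]
  rw [hB, hBn]
  have hval : |bernoulliFun (2*n) t - bernoulliFun (2*n) 0|
      ≤ |bernoulliFun (2*n) (1/2) - bernoulliFun (2*n) 0| := by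
    rcases le_or_gt t (1/2) with h | h
    · exact bern_between hn0 ⟨ht.1, h⟩
    · rw [← bern_sym hn0 ht]
      exact bern_between hn0 ⟨by linarith [ht.2], by linarith⟩
  have hhalf := bern_half hn0
  have h2e : (2:ℝ)/2^(2*n) = 1/2^(2*n-1) := by
    rw [show 2*n = (2*n-1) + 1 from by omega, pow_succ]
    have : (2:ℝ)^(2*n-1) ≠ 0 := by positivity
    field_simp
    ring_nf; congr 1; omega
  have hle : (2:ℝ)/2^(2*n) ≤ 2 := by
    have h1 : (1:ℝ) ≤ 2^(2*n) := one_le_pow₀ (by norm_num)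
    rw [div_le_iff₀ (by positivity)]
    nlinarith
  calc |bernoulliFun (2*n) t - bernoulliFun (2*n) 0|
      ≤ |bernoulliFun (2*n) (1/2) - bernoulliFun (2*n) 0| := hval
    _ = |(2/2^(2*n) - 2) * bernoulliFun (2*n) 0| := by rw [hhalf]; congr 1; ring
    _ = |2/2^(2*n) - 2| * |bernoulliFun (2*n) 0| := abs_mul _ _
    _ = (2 - 1/(2:ℝ)^(2*n-1)) * |bernoulliFun (2*n) 0| := by
        rw [abs_of_nonpos (by linarith), ← h2e]; ring_nf
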